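/- Let B₀, ..., B_ℓ: X → ℝ be a k-inductive interpolation-inspired barrier certificate (version 1) for a discrete-time stochastic system S, i.e., there exist 0 ≤ γ ≤ 1, ℓ ∈ ℕ, k ∈ ℕ_{≥1}, c ≥ 0, α_i > 0 (0 ≤ i < ℓ) such that: B_i ≥ 0 on X for 0 ≤ i ≤ ℓ; B₀ ≤ γ on X₀; B_i ≥ 1 on X_u for all i; E[B_{i+1}(f(x,w))|x] ≤ α_i B_i(x) on X \ X_u for 0 ≤ i < ℓ; E[B_ℓ(f(x,w))|x] ≤ B_ℓ(x) + c on X \ X_u; and E[B_ℓ(f^k(x,w_k))|x] ≤ B_ℓ(x) on X \ X_u. Then for every x₀ ∈ X₀, P{x_{x₀}(t) ∉ X_u for all t ∈ ℕ} ≥ 1 − γ(1 + k∏_{i=0}^{ℓ−1}α_i + ∑_{t=0}^{ℓ−2}∏_{i=0}^{t}α_i) − k(k−1)c/2. -/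

import Mathlib

open MeasureTheory Filter
open scoped ENNReal

/-- `iterNoise f n x w` is the `n`-fold composition `f^n(x, w)` of the transition map `f`,
fed with the noise vector `w = (w 0, …, w (n-1))`. -/
def iterNoise {X W : Type*} (f : X → W → X) : (n : ℕ) → X → (Fin n → W) → X
  | 0, x, _ => x
  | n + 1, x, w => f (iterNoise f n x fun i => w i.castSucc) (w (Fin.last n))

lemma iterNoise_measurable {X W : Type*} [MeasurableSpace X] [MeasurableSpace W]
    {f : X → W → X} (hf : Measurable (Function.uncurry f)) (n : ℕ) :
    Measurable (fun p : X × (Fin n → W) => iterNoise f n p.1 p.2) := by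
  induction n with
  | zero => simpa [iterNoise] using measurable_fst
  | succ n ih =>
      have h1 : Measurable (fun p : X × (Fin (n+1) → W) =>
          iterNoise f n p.1 (fun i => p.2 i.castSucc)) :=
        ih.comp (measurable_fst.prodMk
          (measurable_pi_lambda _ fun i => (measurable_pi_apply _).comp measurable_snd))
      have h2 : Measurable (fun p : X × (Fin (n+1) → W) => p.2 (Fin.last n)) :=
        (measurable_pi_apply _).comp measurable_snd
      exact hf.comp (h1.prodMk h2)

-- simple real helpers
lemma abs_min_le_abs_add {d L : ℝ} (hL : 0 ≤ L) : |min d L| ≤ |d| + L := by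
  rcases le_total d L with h | h
  · rw [min_eq_left h]; linarith [abs_nonneg d]
  · rw [min_eq_right h, abs_of_nonneg hL]; linarith [abs_nonneg d]

lemma abs_qm_le {d L : ℝ} (hL : 0 ≤ L) (mm : ℕ) : |max (min d L) (-(mm : ℝ))| ≤ |d| + L := by
  have h1 : |min d L| ≤ |d| + L := abs_min_le_abs_add hL
  rcases le_total (-(mm : ℝ)) (min d L) with h | h
  · rw [max_eq_left h]; exact h1
  · rw [max_eq_right h]
    have h0 : (0 : ℝ) ≤ (mm : ℝ) := Nat.cast_nonneg _
    rw [abs_of_nonpos (by linarith), neg_neg]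
    calc (mm : ℝ) ≤ -(min d L) := by linarith
    _ ≤ |min d L| := neg_le_abs _
    _ ≤ |d| + L := h1

lemma tendsto_max_neg_nat (v : ℝ) :
    Tendsto (fun mm : ℕ => max v (-(mm : ℝ))) atTop (nhds v) := by
  apply Tendsto.congr' _ tendsto_const_nhds
  filter_upwards [eventually_ge_atTop ⌈|v|⌉₊] with mm hmm
  have : |v| ≤ (mm : ℝ) := le_trans (Nat.le_ceil _) (by exact_mod_cast hmm)
  have : -(mm : ℝ) ≤ v := by have := neg_abs_le v; linarith
  exact (max_eq_left this).symm

lemma isup_ofReal_min (a : ℝ) :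
    (⨆ mm : ℕ, ENNReal.ofReal (min a (mm : ℝ))) = ENNReal.ofReal a := by
  apply le_antisymm
  · exact iSup_le fun mm => ENNReal.ofReal_le_ofReal (min_le_left _ _)
  · refine le_iSup_of_le ⌈a⌉₊ ?_
    rw [min_eq_left (Nat.le_ceil a)]

section Transfer
variable {Ω : Type*} {m : MeasurableSpace Ω} {μ : Measure Ω} [IsProbabilityMeasure μ]
  {X : Type*} [MeasurableSpace X] {W : Type*} [MeasurableSpace W]
  {μW : Measure W} [IsProbabilityMeasure μW]
  {f : X → W → X}

lemma transfer (hf : Measurable (Function.uncurry f))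
    (x : ℕ → Ω → X) (ℱ : Filtration ℕ m)
    (t n : ℕ) (hxt : Measurable (x t)) (hxtn : Measurable (x (t + n)))
    (D : X → ℝ) (hD : Measurable D)
    (hint : Integrable (fun ω => D (x (t + n) ω)) μ)
    (hMk : ∀ g : X → ℝ, Measurable g → (∃ C, ∀ y, |g y| ≤ C) →
      μ[(fun ω => g (x (t + n) ω))|ℱ t] =ᵐ[μ]
        fun ω => ∫ w, g (iterNoise f n (x t ω) w) ∂(Measure.pi fun _ : Fin n => μW))
    (L : ℝ) (hL : 0 ≤ L) (A : Set Ω) (hA : MeasurableSet[ℱ t] A) :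
    (∀ᵐ ω ∂μ, Integrable (fun w => D (iterNoise f n (x t ω) w))
        (Measure.pi fun _ : Fin n => μW)) ∧
    Integrable (fun ω => ∫ w, min (D (iterNoise f n (x t ω) w)) L
        ∂(Measure.pi fun _ : Fin n => μW)) μ ∧
    ∫ ω in A, min (D (x (t + n) ω)) L ∂μ =
      ∫ ω in A, ∫ w, min (D (iterNoise f n (x t ω) w)) L
        ∂(Measure.pi fun _ : Fin n => μW) ∂μ := by
  set ν : Measure (Fin n → W) := Measure.pi fun _ : Fin n => μW with hν
  have hle := ℱ.le t
  haveI : SigmaFinite (μ.trim hle) := by infer_instance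
  -- measurability infrastructure
  have base : Measurable (fun p : Ω × (Fin n → W) => iterNoise f n (x t p.1) p.2) :=
    (iterNoise_measurable hf n).comp ((hxt.comp measurable_fst).prodMk measurable_snd)
  have jm : Measurable (fun p : Ω × (Fin n → W) => D (iterNoise f n (x t p.1) p.2)) :=
    hD.comp base
  have jm1 : ∀ ω, Measurable fun w => D (iterNoise f n (x t ω) w) :=
    fun ω => jm.comp measurable_prodMk_left
  set I : Ω → ℝ≥0∞ := fun ω => ∫⁻ w, ENNReal.ofReal |D (iterNoise f n (x t ω) w)| ∂ν with hI
  have measI : Measurable I :=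
    Measurable.lintegral_prod_right (ENNReal.measurable_ofReal.comp jm.abs)
  -- transfer identity for bounded g over the whole space
  have keyg : ∀ g : X → ℝ, Measurable g → (∃ C, ∀ y, |g y| ≤ C) →
      ∫ ω, g (x (t + n) ω) ∂μ = ∫ ω, ∫ w, g (iterNoise f n (x t ω) w) ∂ν ∂μ := by
    rintro g hg ⟨C, hC⟩
    have hint_g : Integrable (fun ω => g (x (t + n) ω)) μ :=
      (integrable_const C).mono' ((hg.comp hxtn).aestronglyMeasurable)
        (ae_of_all _ fun ω => by simpa [Real.norm_eq_abs] using hC (x (t + n) ω))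
    calc ∫ ω, g (x (t + n) ω) ∂μ = ∫ ω, (μ[(fun ω' => g (x (t + n) ω'))|ℱ t]) ω ∂μ :=
          (integral_condExp hle).symm
    _ = _ := integral_congr_ae (hMk g hg ⟨C, hC⟩)
  -- finiteness of ∫ I
  have keyD : ∫⁻ ω, I ω ∂μ ≤ ∫⁻ ω, ENNReal.ofReal (|D (x (t + n) ω)|) ∂μ := by
    set F : ℕ → Ω → ℝ≥0∞ := fun mm ω =>
      ∫⁻ w, ENNReal.ofReal (min |D (iterNoise f n (x t ω) w)| (mm : ℝ)) ∂ν with hF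
    have measF : ∀ mm, Measurable (F mm) := fun mm =>
      Measurable.lintegral_prod_right
        (ENNReal.measurable_ofReal.comp (jm.abs.min measurable_const))
    have monoF : Monotone F := by
      intro a b hab ω
      refine lintegral_mono fun w => ENNReal.ofReal_le_ofReal ?_
      exact min_le_min le_rfl (by exact_mod_cast hab)
    have hIsup : ∀ ω, I ω = ⨆ mm, F mm ω := by
      intro ω
      calc I ω = ∫⁻ w, ⨆ mm : ℕ, ENNReal.ofReal
            (min |D (iterNoise f n (x t ω) w)| (mm : ℝ)) ∂ν :=
            lintegral_congr fun w => (isup_ofReal_min _).symm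
      _ = ⨆ mm, F mm ω := by
            refine lintegral_iSup (fun mm => ENNReal.measurable_ofReal.comp
              (((jm1 ω).abs).min measurable_const)) ?_
            intro a b hab w
            exact ENNReal.ofReal_le_ofReal (min_le_min le_rfl (by exact_mod_cast hab))
    have hFle : ∀ mm, ∫⁻ ω, F mm ω ∂μ ≤ ∫⁻ ω, ENNReal.ofReal (|D (x (t + n) ω)|) ∂μ := by
      intro mm
      set g : X → ℝ := fun y => min |D y| (mm : ℝ) with hg
      have hg_meas : Measurable g := hD.abs.min measurable_const
      have hg_nonneg : ∀ y, 0 ≤ g y := fun y => le_min (abs_nonneg _) (Nat.cast_nonneg _)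
      have hg_bdd : ∀ y, |g y| ≤ (mm : ℝ) := fun y => by
        rw [abs_of_nonneg (hg_nonneg y)]; exact min_le_right _ _
      have hint_w : ∀ ω, Integrable (fun w => g (iterNoise f n (x t ω) w)) ν :=
        fun ω => (integrable_const (mm : ℝ)).mono'
          ((hg_meas.comp ((iterNoise_measurable hf n).comp
            (measurable_const.prodMk measurable_id))).aestronglyMeasurable)
          (ae_of_all _ fun w => by simpa [Real.norm_eq_abs] using hg_bdd _)
      have hint_ω : Integrable (fun ω => ∫ w, g (iterNoise f n (x t ω) w) ∂ν) μ := by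
        refine (integrable_const (mm : ℝ)).mono'
          ((StronglyMeasurable.integral_prod_right'
            ((hg_meas.comp base).stronglyMeasurable)).aestronglyMeasurable) ?_
        refine ae_of_all _ fun ω => ?_
        calc ‖∫ w, g (iterNoise f n (x t ω) w) ∂ν‖
            ≤ ∫ w, ‖g (iterNoise f n (x t ω) w)‖ ∂ν := norm_integral_le_integral_norm _
        _ ≤ ∫ _w, (mm : ℝ) ∂ν := integral_mono (hint_w ω).norm (integrable_const _)
              (fun w => by simpa [Real.norm_eq_abs] using hg_bdd _)
        _ = (mm : ℝ) := by simp
      have hint_g : Integrable (fun ω => g (x (t + n) ω)) μ :=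
        (integrable_const (mm : ℝ)).mono' ((hg_meas.comp hxtn).aestronglyMeasurable)
          (ae_of_all _ fun ω => by simpa [Real.norm_eq_abs] using hg_bdd _)
      have hkey := keyg g hg_meas ⟨(mm : ℝ), hg_bdd⟩
      have e1 : ∫⁻ ω, F mm ω ∂μ = ∫⁻ ω, ENNReal.ofReal (∫ w, g (iterNoise f n (x t ω) w) ∂ν) ∂μ := by
        refine lintegral_congr fun ω => ?_
        rw [ofReal_integral_eq_lintegral_ofReal (hint_w ω) (ae_of_all _ fun w => hg_nonneg _)]
      have e2 : ∫⁻ ω, ENNReal.ofReal (∫ w, g (iterNoise f n (x t ω) w) ∂ν) ∂μ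
          = ENNReal.ofReal (∫ ω, ∫ w, g (iterNoise f n (x t ω) w) ∂ν ∂μ) := by
        rw [ofReal_integral_eq_lintegral_ofReal hint_ω]
        exact ae_of_all _ fun ω => integral_nonneg fun w => hg_nonneg _
      have e3 : ENNReal.ofReal (∫ ω, g (x (t + n) ω) ∂μ)
          = ∫⁻ ω, ENNReal.ofReal (g (x (t + n) ω)) ∂μ :=
        ofReal_integral_eq_lintegral_ofReal hint_g (ae_of_all _ fun ω => hg_nonneg _)
      calc ∫⁻ ω, F mm ω ∂μ = ENNReal.ofReal (∫ ω, g (x (t + n) ω) ∂μ) := by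
            rw [e1, e2, ← hkey]
      _ = ∫⁻ ω, ENNReal.ofReal (g (x (t + n) ω)) ∂μ := e3
      _ ≤ ∫⁻ ω, ENNReal.ofReal (|D (x (t + n) ω)|) ∂μ :=
            lintegral_mono fun ω => ENNReal.ofReal_le_ofReal (min_le_left _ _)
    calc ∫⁻ ω, I ω ∂μ = ∫⁻ ω, ⨆ mm, F mm ω ∂μ := lintegral_congr hIsup
    _ = ⨆ mm, ∫⁻ ω, F mm ω ∂μ := lintegral_iSup measF monoF
    _ ≤ _ := iSup_le hFle
  have hfin : ∫⁻ ω, ENNReal.ofReal (|D (x (t + n) ω)|) ∂μ < ⊤ := by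
    have h2 := hint.hasFiniteIntegral
    simpa [HasFiniteIntegral, ← Real.norm_eq_abs, ofReal_norm] using h2
  have hIfin : ∀ᵐ ω ∂μ, I ω < ⊤ := ae_lt_top measI (lt_of_le_of_lt keyD hfin).ne
  have aeint : ∀ᵐ ω ∂μ, Integrable (fun w => D (iterNoise f n (x t ω) w)) ν := by
    filter_upwards [hIfin] with ω hω
    refine ⟨(jm1 ω).aestronglyMeasurable, ?_⟩
    simpa [HasFiniteIntegral, ← Real.norm_eq_abs, ofReal_norm, hI] using hω
  -- integral of |D ∘ iter| equals toReal of I, a.e.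
  have hIω : ∀ᵐ ω ∂μ, ∫ w, |D (iterNoise f n (x t ω) w)| ∂ν = (I ω).toReal := by
    filter_upwards [aeint] with ω hω
    rw [integral_eq_lintegral_of_nonneg_ae (ae_of_all _ fun w => abs_nonneg _)
      hω.abs.aestronglyMeasurable]
  -- the dominating function for outer integrals
  have hIbdd : Integrable (fun ω => (I ω).toReal + L) μ := by
    have h1 : Integrable (fun ω => (I ω).toReal) μ := by
      refine ⟨measI.ennreal_toReal.aestronglyMeasurable, ?_⟩
      rw [hasFiniteIntegral_iff_norm]
      calc ∫⁻ ω, ENNReal.ofReal ‖(I ω).toReal‖ ∂μ ≤ ∫⁻ ω, I ω ∂μ := by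
            refine lintegral_mono fun ω => ?_
            rw [Real.norm_eq_abs, abs_of_nonneg ENNReal.toReal_nonneg]
            exact ENNReal.ofReal_toReal_le
      _ < ⊤ := lt_of_le_of_lt keyD hfin
    exact h1.add (integrable_const L)
  -- the truncations q mm
  set q : ℕ → X → ℝ := fun mm y => max (min (D y) L) (-(mm : ℝ)) with hq
  have hq_meas : ∀ mm, Measurable (q mm) := fun mm =>
    (hD.min measurable_const).max measurable_const
  have hq_bdd : ∀ mm y, |q mm y| ≤ max L (mm : ℝ) := by
    intro mm y
    rw [abs_le]
    constructor
    · calc -(max L (mm : ℝ)) ≤ -(mm : ℝ) := by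
            simp [neg_le_neg_iff]
      _ ≤ q mm y := le_max_right _ _
    · exact max_le (le_trans (min_le_right _ _) (le_max_left _ _))
        (le_trans (by positivity) (le_max_right L (mm : ℝ)) |>.trans' (neg_nonpos.2 (Nat.cast_nonneg _)))
  have hq_int_w : ∀ ω mm, Integrable (fun w => q mm (iterNoise f n (x t ω) w)) ν := by
    intro ω mm
    exact (integrable_const (max L (mm : ℝ))).mono'
      (((hq_meas mm).comp (base.comp measurable_prodMk_left)).aestronglyMeasurable)
      (ae_of_all _ fun w => by simpa [Real.norm_eq_abs] using hq_bdd mm _)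
  have hq_int_x : ∀ mm, Integrable (fun ω => q mm (x (t + n) ω)) μ := fun mm =>
    (integrable_const (max L (mm : ℝ))).mono'
      (((hq_meas mm).comp hxtn).aestronglyMeasurable)
      (ae_of_all _ fun ω => by simpa [Real.norm_eq_abs] using hq_bdd mm _)
  -- the per-mm identity on A
  have hAm : MeasurableSet A := hle _ hA
  have heqm : ∀ mm, ∫ ω in A, q mm (x (t + n) ω) ∂μ
      = ∫ ω in A, ∫ w, q mm (iterNoise f n (x t ω) w) ∂ν ∂μ := by
    intro mm
    have h1 := hMk (q mm) (hq_meas mm) ⟨max L (mm : ℝ), hq_bdd mm⟩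
    calc ∫ ω in A, q mm (x (t + n) ω) ∂μ
        = ∫ ω in A, (μ[(fun ω' => q mm (x (t + n) ω'))|ℱ t]) ω ∂μ :=
          (setIntegral_condExp hle (hq_int_x mm) hA).symm
    _ = _ := integral_congr_ae (ae_restrict_of_ae h1)
  -- LHS limit
  have hT1 : Tendsto (fun mm => ∫ ω in A, q mm (x (t + n) ω) ∂μ) atTop
      (nhds (∫ ω in A, min (D (x (t + n) ω)) L ∂μ)) := by
    refine tendsto_integral_of_dominated_convergence (fun ω => |D (x (t + n) ω)| + L)
      (fun mm => ((hq_meas mm).comp hxtn).aestronglyMeasurable.restrict)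
      (hint.abs.add (integrable_const L)).restrict
      (fun mm => ae_of_all _ fun ω => by
        simpa [Real.norm_eq_abs, hq] using abs_qm_le hL mm (d := D (x (t + n) ω)))
      (ae_of_all _ fun ω => tendsto_max_neg_nat _)
  -- measurability of the inner-integral functions
  have smG : ∀ mm, AEStronglyMeasurable
      (fun ω => ∫ w, q mm (iterNoise f n (x t ω) w) ∂ν) μ := fun mm =>
    (StronglyMeasurable.integral_prod_right'
      (((hq_meas mm).comp base).stronglyMeasurable)).aestronglyMeasurable
  have smG' : AEStronglyMeasurable
      (fun ω => ∫ w, min (D (iterNoise f n (x t ω) w)) L ∂ν) μ :=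
    (StronglyMeasurable.integral_prod_right'
      ((jm.min measurable_const).stronglyMeasurable)).aestronglyMeasurable
  -- a.e. bounds for the inner integrals
  have hGbound : ∀ᵐ ω ∂μ, ∀ (g : (Fin n → W) → ℝ),
      Integrable g ν → (∀ w, |g w| ≤ |D (iterNoise f n (x t ω) w)| + L) →
      ‖∫ w, g w ∂ν‖ ≤ (I ω).toReal + L := by
    filter_upwards [aeint, hIω] with ω hω hIω
    intro g hg hgle
    calc ‖∫ w, g w ∂ν‖ ≤ ∫ w, ‖g w‖ ∂ν := norm_integral_le_integral_norm _
    _ ≤ ∫ w, (|D (iterNoise f n (x t ω) w)| + L) ∂ν :=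
        integral_mono hg.norm (hω.abs.add (integrable_const L))
          (fun w => by simpa [Real.norm_eq_abs] using hgle w)
    _ = (I ω).toReal + L := by
        rw [integral_add hω.abs (integrable_const L), hIω]; simp
  -- RHS limit
  have hT2 : Tendsto (fun mm => ∫ ω in A, ∫ w, q mm (iterNoise f n (x t ω) w) ∂ν ∂μ) atTop
      (nhds (∫ ω in A, ∫ w, min (D (iterNoise f n (x t ω) w)) L ∂ν ∂μ)) := by
    refine tendsto_integral_of_dominated_convergence (fun ω => (I ω).toReal + L)
      (fun mm => (smG mm).restrict) hIbdd.restrict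
      (fun mm => ae_restrict_of_ae ?_) (ae_restrict_of_ae ?_)
    · filter_upwards [hGbound] with ω hb
      exact hb _ (hq_int_w ω mm) (fun w => abs_qm_le hL mm)
    · filter_upwards [aeint] with ω hω
      refine tendsto_integral_of_dominated_convergence
        (fun w => |D (iterNoise f n (x t ω) w)| + L)
        (fun mm => (hq_int_w ω mm).aestronglyMeasurable)
        (hω.abs.add (integrable_const L))
        (fun mm => ae_of_all _ fun w => by
          simpa [Real.norm_eq_abs, hq] using abs_qm_le hL mm (d := D (iterNoise f n (x t ω) w)))
        (ae_of_all _ fun w => tendsto_max_neg_nat _)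
  have heq : ∫ ω in A, min (D (x (t + n) ω)) L ∂μ
      = ∫ ω in A, ∫ w, min (D (iterNoise f n (x t ω) w)) L ∂ν ∂μ := by
    have hT1' : Tendsto (fun mm => ∫ ω in A, ∫ w, q mm (iterNoise f n (x t ω) w) ∂ν ∂μ) atTop
        (nhds (∫ ω in A, min (D (x (t + n) ω)) L ∂μ)) := by
      refine hT1.congr fun mm => heqm mm
    exact tendsto_nhds_unique hT1' hT2
  -- integrability of the limit inner integral
  have hintG : Integrable (fun ω => ∫ w, min (D (iterNoise f n (x t ω) w)) L ∂ν) μ := by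
    refine hIbdd.mono' smG' ?_
    filter_upwards [aeint, hGbound] with ω hω hb
    refine hb _ ?_ (fun w => abs_min_le_abs_add hL)
    exact (hω.abs.add (integrable_const L)).mono'
      ((jm1 ω).min measurable_const).aestronglyMeasurable
      (ae_of_all _ fun w => by simpa [Real.norm_eq_abs] using abs_min_le_abs_add hL)
  exact ⟨aeint, hintG, heq⟩

end Transfer

section PiOne
variable {W : Type*} [MeasurableSpace W] (μW : Measure W) [IsProbabilityMeasure μW]

lemma pi_one_integral (g : W → ℝ) :
    ∫ w : Fin 1 → W, g (w (Fin.last 0)) ∂(Measure.pi fun _ : Fin 1 => μW) = ∫ u, g u ∂μW :=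
  (measurePreserving_funUnique μW (Fin 1)).integral_comp
    (MeasurableEquiv.funUnique (Fin 1) W).measurableEmbedding g

lemma pi_one_integrable (g : W → ℝ) :
    Integrable (fun w : Fin 1 → W => g (w (Fin.last 0))) (Measure.pi fun _ : Fin 1 => μW) ↔
      Integrable g μW :=
  (measurePreserving_funUnique μW (Fin 1)).integrable_comp_emb
    (MeasurableEquiv.funUnique (Fin 1) W).measurableEmbedding

end PiOne

/-- Theorem 3.6: a `k`-inductive interpolation-inspired barrier certificate (version 1)
implies safety with probability at least
`1 - γ (1 + k ∏_{i<ℓ} α_i + ∑_{t=0}^{ℓ-2} ∏_{i=0}^{t} α_i) - k(k-1)c/2`. -/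
theorem stmt_11 {Ω : Type*} {m : MeasurableSpace Ω} (μ : Measure Ω) [IsProbabilityMeasure μ]
    {X : Type*} [MeasurableSpace X] {W : Type*} [MeasurableSpace W]
    (μW : Measure W) [IsProbabilityMeasure μW]
    (Xs X0 Xu : Set X) (hX0sub : X0 ⊆ Xs) (hXusub : Xu ⊆ Xs) (hXu : MeasurableSet Xu)
    (f : X → W → X) (hf : Measurable (Function.uncurry f))
    (ℓ : ℕ) (k : ℕ) (hk : 1 ≤ k)
    (γ c : ℝ) (hγ0 : 0 ≤ γ) (hγ1 : γ ≤ 1) (hc : 0 ≤ c)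
    (B : ℕ → X → ℝ) (hBmeas : ∀ i, Measurable (B i))
    (α : ℕ → ℝ) (hα : ∀ i < ℓ, 0 < α i)
    -- k-IBC v1 conditions (Definition 3.5)
    (hB0 : ∀ i ≤ ℓ, ∀ x ∈ Xs, 0 ≤ B i x)
    (hBinit : ∀ x ∈ X0, B 0 x ≤ γ)
    (hBunsafe : ∀ i ≤ ℓ, ∀ x ∈ Xu, 1 ≤ B i x)
    (hBstep : ∀ i < ℓ, ∀ x ∈ Xs \ Xu, ∫ w, B (i + 1) (f x w) ∂μW ≤ α i * B i x)
    (hBcmart : ∀ x ∈ Xs \ Xu, ∫ w, B ℓ (f x w) ∂μW ≤ B ℓ x + c)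
    (hBksuper : ∀ x ∈ Xs \ Xu,
      ∫ w, B ℓ (iterNoise f k x w) ∂(Measure.pi fun _ : Fin k => μW) ≤ B ℓ x)
    -- the solution process starting from x0 ∈ X0
    (x0 : X) (hx0 : x0 ∈ X0)
    (x : ℕ → Ω → X) (ℱ : Filtration ℕ m)
    (hadapted : ∀ t, Measurable[ℱ t] (x t))
    (hmeasx : ∀ t, Measurable (x t))
    (hinit : ∀ ω, x 0 ω = x0)
    (hinv : ∀ t ω, x t ω ∈ Xs)
    (hintB : ∀ i t, Integrable (fun ω => B i (x t ω)) μ)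
    (hMarkov : ∀ (t n : ℕ) (g : X → ℝ), Measurable g → (∃ C, ∀ y, |g y| ≤ C) →
      μ[(fun ω => g (x (t + n) ω))|ℱ t] =ᵐ[μ]
        fun ω => ∫ w, g (iterNoise f n (x t ω) w) ∂(Measure.pi fun _ : Fin n => μW)) :
    ENNReal.ofReal (1 - γ * (1 + (k : ℝ) * ∏ i ∈ Finset.range ℓ, α i +
        ∑ t ∈ Finset.range (ℓ - 1), ∏ i ∈ Finset.range (t + 1), α i) -
        (k : ℝ) * ((k : ℝ) - 1) * c / 2) ≤
      μ {ω | ∀ t, x t ω ∉ Xu} := by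
  classical
  -- the level multipliers
  set Λ : ℕ → ℝ := fun t => ∏ i ∈ Finset.range (min t ℓ), α i with hΛdef
  have hΛpos : ∀ t, 0 < Λ t := by
    intro t
    refine Finset.prod_pos fun i hi => hα i ?_
    rw [Finset.mem_range] at hi
    exact lt_of_lt_of_le hi (min_le_right _ _)
  have hΛtop : ∀ t, ℓ ≤ t → Λ t = Λ ℓ := by
    intro t ht; simp [hΛdef, min_eq_right ht]
  have hΛle : ∀ t, t ≤ ℓ → Λ t = ∏ i ∈ Finset.range t, α i := by
    intro t ht; simp [hΛdef, min_eq_left ht]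
  have hΛsucc : ∀ t, t < ℓ → Λ (t + 1) = α t * Λ t := by
    intro t ht
    rw [hΛle _ ht, hΛle _ ht.le, Finset.prod_range_succ, mul_comm]
  -- the truncation level
  obtain ⟨M, hM⟩ : ∃ M : ℝ, ∀ t, 1 ≤ M * Λ t := by
    refine ⟨(Finset.range (ℓ + 1)).sup' ⟨0, by simp⟩ fun t => (Λ t)⁻¹, fun t => ?_⟩
    have h1 : Λ (min t ℓ) = Λ t := by
      simp [hΛdef, min_eq_left (min_le_right t ℓ)]
    have hmem : min t ℓ ∈ Finset.range (ℓ + 1) := by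
      simp [Nat.lt_succ_iff]
    have h2 : (Λ (min t ℓ))⁻¹ ≤ (Finset.range (ℓ + 1)).sup' ⟨0, by simp⟩ fun t => (Λ t)⁻¹ :=
      Finset.le_sup' (fun t => (Λ t)⁻¹) hmem
    rw [h1] at h2
    calc (1 : ℝ) = (Λ t)⁻¹ * Λ t := (inv_mul_cancel₀ (hΛpos t).ne').symm
    _ ≤ _ * Λ t := mul_le_mul_of_nonneg_right h2 (hΛpos t).le
  have hLpos : ∀ t, 0 < M * Λ t := fun t => lt_of_lt_of_le zero_lt_one (hM t)
  -- the truncated barriers, safe-up-to sets, first-hit sets, values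
  set φ : ℕ → X → ℝ := fun t y => min (B (min t ℓ) y) (M * Λ t) with hφdef
  set S : ℕ → Set Ω := fun t => {ω | ∀ s, s < t → x s ω ∉ Xu} with hSdef
  set FH : ℕ → Set Ω := fun t => S t ∩ {ω | x t ω ∈ Xu} with hFHdef
  set e : ℕ → ℝ := fun t => ∫ ω in S t, φ t (x t ω) ∂μ with hedef
  -- basic set facts
  have hSm : ∀ t, MeasurableSet (S t) := by
    intro t
    have : S t = ⋂ s ∈ Finset.range t, (x s) ⁻¹' Xuᶜ := by
      ext ω; simp [hSdef]
    rw [this]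
    exact Finset.measurableSet_biInter _ fun s _ => (hmeasx s) hXu.compl
  have hSF : ∀ t, MeasurableSet[ℱ t] (S (t + 1)) := by
    intro t
    have : S (t + 1) = ⋂ s ∈ Finset.range (t + 1), (x s) ⁻¹' Xuᶜ := by
      ext ω; simp [hSdef]
    rw [this]
    refine Finset.measurableSet_biInter _ fun s hs => ?_
    rw [Finset.mem_range, Nat.lt_succ_iff] at hs
    exact (ℱ.mono hs) _ ((hadapted s) hXu.compl)
  have hFHm : ∀ t, MeasurableSet (FH t) := fun t =>
    (hSm t).inter ((hmeasx t) hXu)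
  have hSanti : ∀ s t, s ≤ t → S t ⊆ S s := by
    intro s t hst ω hω u hu
    exact hω u (lt_of_lt_of_le hu hst)
  have hSsub : ∀ t, S (t + 1) ⊆ S t := fun t => hSanti _ _ (Nat.le_succ t)
  have hSnotu : ∀ t ω, ω ∈ S (t + 1) → x t ω ∈ Xs \ Xu :=
    fun t ω hω => ⟨hinv t ω, hω t (Nat.lt_succ_self t)⟩
  have hSsplit : ∀ t, S t = S (t + 1) ∪ FH t := by
    intro t
    ext ω
    constructor
    · intro hω
      by_cases hx : x t ω ∈ Xu
      · exact Or.inr ⟨hω, hx⟩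
      · refine Or.inl fun s hs => ?_
        rcases Nat.lt_succ_iff_lt_or_eq.mp hs with h | h
        · exact hω s h
        · rw [h]; exact hx
    · rintro (hω | hω)
      · exact hSsub t hω
      · exact hω.1
  have hSdisj : ∀ t, Disjoint (S (t + 1)) (FH t) := by
    intro t
    rw [Set.disjoint_left]
    intro ω h1 h2
    exact h1 t (Nat.lt_succ_self t) h2.2
  -- φ facts
  have hφnonneg : ∀ t y, y ∈ Xs → 0 ≤ φ t y := fun t y hy =>
    le_min (hB0 _ (min_le_right t ℓ) y hy) (hLpos t).le
  have hφone : ∀ t y, y ∈ Xu → 1 ≤ φ t y := fun t y hy =>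
    le_min (hBunsafe _ (min_le_right t ℓ) y hy) (hM t)
  have hφint : ∀ t s, Integrable (fun ω => φ t (x s ω)) μ := by
    intro t s
    refine ((hintB (min t ℓ) s).abs.add (integrable_const (M * Λ t))).mono'
      (((hBmeas _).min measurable_const).comp (hmeasx s)).aestronglyMeasurable
      (ae_of_all _ fun ω => ?_)
    simpa [Real.norm_eq_abs] using abs_min_le_abs_add (hLpos t).le
  have hφtop : ∀ t, ℓ ≤ t → ∀ y, φ t y = min (B ℓ y) (M * Λ ℓ) := by
    intro t ht y
    simp [hφdef, min_eq_right ht, hΛtop t ht]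
  -- value facts
  have he_nonneg : ∀ t, 0 ≤ e t := fun t =>
    setIntegral_nonneg (hSm t) fun ω _ => hφnonneg t _ (hinv t ω)
  have heS : ∀ t, ∫ ω in S t, φ t (x t ω) ∂μ = e t := fun t => rfl
  -- F7 : first-hit mass is dominated by e
  have hF7 : ∀ t, (μ (FH t)).toReal ≤ e t := by
    intro t
    have h0 : ∫ (_ : Ω) in FH t, (1 : ℝ) ∂μ = (μ (FH t)).toReal := by
      simp [Measure.real]
    calc (μ (FH t)).toReal = ∫ (_ : Ω) in FH t, (1 : ℝ) ∂μ := h0.symm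
    _ ≤ ∫ ω in FH t, φ t (x t ω) ∂μ := by
        refine setIntegral_mono_on (integrableOn_const (measure_ne_top _ _))
          ((hφint t t).integrableOn) (hFHm t) fun ω hω => hφone t _ hω.2
    _ ≤ ∫ ω in S t, φ t (x t ω) ∂μ := by
        refine setIntegral_mono_set ((hφint t t).integrableOn)
          (ae_of_all _ fun ω => hφnonneg t _ (hinv t ω)) ?_
        exact HasSubset.Subset.eventuallyLE Set.inter_subset_left
  -- F3 : initial bound
  have hF3 : e 0 ≤ γ := by
    have hS0 : S 0 = Set.univ := by ext ω; simp [hSdef]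
    have : e 0 = φ 0 x0 := by
      rw [hedef]
      simp only [hS0, Measure.restrict_univ]
      rw [show (fun ω => φ 0 (x 0 ω)) = fun _ => φ 0 x0 by funext ω; rw [hinit ω]]
      simp
    rw [this]
    refine le_trans (min_le_left _ _) ?_
    rw [Nat.zero_min]
    exact hBinit x0 hx0
  -- split of hF7 used twice
  have hF7' : ∀ t, (μ (FH t)).toReal ≤ ∫ ω in FH t, φ t (x t ω) ∂μ := by
    intro t
    have h0 : ∫ (_ : Ω) in FH t, (1 : ℝ) ∂μ = (μ (FH t)).toReal := by simp [Measure.real]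
    rw [← h0]
    refine setIntegral_mono_on (integrableOn_const (measure_ne_top _ _))
      ((hφint t t).integrableOn) (hFHm t) fun ω hω => hφone t _ hω.2
  -- F4 : interpolation steps
  have hF4 : ∀ t, t < ℓ → e (t + 1) ≤ α t * e t := by
    intro t ht
    have ht1 : t + 1 ≤ ℓ := ht
    obtain ⟨aeint, hintG, heq⟩ := transfer hf x ℱ t 1 (hmeasx t) (hmeasx (t + 1))
      (B (t + 1)) (hBmeas _) (hintB (t + 1) (t + 1)) (hMarkov t 1)
      (M * Λ (t + 1)) (hLpos (t + 1)).le (S (t + 1)) (hSF t)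
    have hφeq : ∀ y, φ (t + 1) y = min (B (t + 1) y) (M * Λ (t + 1)) := by
      intro y; simp [hφdef, min_eq_left ht1]
    have h1 : e (t + 1) = ∫ ω in S (t + 1), min (B (t + 1) (x (t + 1) ω)) (M * Λ (t + 1)) ∂μ := by
      simp only [hedef]
      exact integral_congr_ae (ae_of_all _ fun ω => hφeq _)
    have hbound : ∀ᵐ ω ∂μ.restrict (S (t + 1)),
        (∫ w, min (B (t + 1) (iterNoise f 1 (x t ω) w)) (M * Λ (t + 1))
          ∂(Measure.pi fun _ : Fin 1 => μW)) ≤ α t * φ t (x t ω) := by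
      filter_upwards [ae_restrict_of_ae aeint, ae_restrict_mem ((ℱ.le t) _ (hSF t))]
        with ω hω hmemω
      have hxts := hSnotu t ω hmemω
      have hint1 : Integrable (fun u => B (t + 1) (f (x t ω) u)) μW :=
        (pi_one_integrable μW (fun u => B (t + 1) (f (x t ω) u))).mp hω
      have hqint : Integrable (fun u => min (B (t + 1) (f (x t ω) u)) (M * Λ (t + 1))) μW :=
        (hint1.abs.add (integrable_const _)).mono'
          (((hBmeas _).min measurable_const).comp
            (hf.comp (measurable_const.prodMk measurable_id))).aestronglyMeasurable
          (ae_of_all _ fun u => by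
            simpa [Real.norm_eq_abs] using abs_min_le_abs_add (hLpos (t + 1)).le)
      have heq1 : (∫ w, min (B (t + 1) (iterNoise f 1 (x t ω) w)) (M * Λ (t + 1))
          ∂(Measure.pi fun _ : Fin 1 => μW))
          = ∫ u, min (B (t + 1) (f (x t ω) u)) (M * Λ (t + 1)) ∂μW :=
        pi_one_integral μW (fun u => min (B (t + 1) (f (x t ω) u)) (M * Λ (t + 1)))
      rw [heq1]
      have le1 : ∫ u, min (B (t + 1) (f (x t ω) u)) (M * Λ (t + 1)) ∂μW ≤ α t * B t (x t ω) :=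
        le_trans (integral_mono hqint hint1 fun u => min_le_left _ _) (hBstep t ht _ hxts)
      have le2 : ∫ u, min (B (t + 1) (f (x t ω) u)) (M * Λ (t + 1)) ∂μW ≤ M * Λ (t + 1) := by
        calc ∫ u, min (B (t + 1) (f (x t ω) u)) (M * Λ (t + 1)) ∂μW
            ≤ ∫ _u, (M * Λ (t + 1)) ∂μW :=
              integral_mono hqint (integrable_const _) fun u => min_le_right _ _
        _ = M * Λ (t + 1) := by simp
      have hfin : min (α t * B t (x t ω)) (M * Λ (t + 1)) ≤ α t * φ t (x t ω) := by
        have hφt : φ t (x t ω) = min (B t (x t ω)) (M * Λ t) := by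
          simp [hφdef, min_eq_left ht.le]
        rw [hφt, mul_min_of_nonneg _ _ (hα t ht).le, hΛsucc t ht]
        exact min_le_min le_rfl (le_of_eq (by ring))
      exact le_trans (le_min le1 le2) hfin
    calc e (t + 1) = ∫ ω in S (t + 1), (∫ w, min (B (t + 1) (iterNoise f 1 (x t ω) w))
          (M * Λ (t + 1)) ∂(Measure.pi fun _ : Fin 1 => μW)) ∂μ := by rw [h1, heq]
    _ ≤ ∫ ω in S (t + 1), α t * φ t (x t ω) ∂μ :=
        setIntegral_mono_ae_restrict hintG.integrableOn
          (((hφint t t).const_mul (α t)).integrableOn) hbound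
    _ = α t * ∫ ω in S (t + 1), φ t (x t ω) ∂μ := integral_const_mul _ _
    _ ≤ α t * e t := by
        refine mul_le_mul_of_nonneg_left ?_ (hα t ht).le
        rw [← heS t]
        exact setIntegral_mono_set ((hφint t t).integrableOn)
          (ae_of_all _ fun ω => hφnonneg t _ (hinv t ω))
          (HasSubset.Subset.eventuallyLE (hSsub t))
  -- F5 : c-martingale steps
  have hF5 : ∀ t, ℓ ≤ t → e (t + 1) ≤ e t + c := by
    intro t ht
    obtain ⟨aeint, hintG, heq⟩ := transfer hf x ℱ t 1 (hmeasx t) (hmeasx (t + 1))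
      (B ℓ) (hBmeas _) (hintB ℓ (t + 1)) (hMarkov t 1)
      (M * Λ ℓ) (hLpos ℓ).le (S (t + 1)) (hSF t)
    have h1 : e (t + 1) = ∫ ω in S (t + 1), min (B ℓ (x (t + 1) ω)) (M * Λ ℓ) ∂μ := by
      simp only [hedef]
      exact integral_congr_ae (ae_of_all _ fun ω =>
        hφtop (t + 1) (le_trans ht (Nat.le_succ t)) _)
    have hbound : ∀ᵐ ω ∂μ.restrict (S (t + 1)),
        (∫ w, min (B ℓ (iterNoise f 1 (x t ω) w)) (M * Λ ℓ)
          ∂(Measure.pi fun _ : Fin 1 => μW)) ≤ φ t (x t ω) + c := by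
      filter_upwards [ae_restrict_of_ae aeint, ae_restrict_mem ((ℱ.le t) _ (hSF t))]
        with ω hω hmemω
      have hxts := hSnotu t ω hmemω
      have hint1 : Integrable (fun u => B ℓ (f (x t ω) u)) μW :=
        (pi_one_integrable μW (fun u => B ℓ (f (x t ω) u))).mp hω
      have hqint : Integrable (fun u => min (B ℓ (f (x t ω) u)) (M * Λ ℓ)) μW :=
        (hint1.abs.add (integrable_const _)).mono'
          (((hBmeas _).min measurable_const).comp
            (hf.comp (measurable_const.prodMk measurable_id))).aestronglyMeasurable
          (ae_of_all _ fun u => by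
            simpa [Real.norm_eq_abs] using abs_min_le_abs_add (hLpos ℓ).le)
      have heq1 : (∫ w, min (B ℓ (iterNoise f 1 (x t ω) w)) (M * Λ ℓ)
          ∂(Measure.pi fun _ : Fin 1 => μW))
          = ∫ u, min (B ℓ (f (x t ω) u)) (M * Λ ℓ) ∂μW :=
        pi_one_integral μW (fun u => min (B ℓ (f (x t ω) u)) (M * Λ ℓ))
      rw [heq1]
      have le1 : ∫ u, min (B ℓ (f (x t ω) u)) (M * Λ ℓ) ∂μW ≤ B ℓ (x t ω) + c :=
        le_trans (integral_mono hqint hint1 fun u => min_le_left _ _) (hBcmart _ hxts)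
      have le2 : ∫ u, min (B ℓ (f (x t ω) u)) (M * Λ ℓ) ∂μW ≤ M * Λ ℓ := by
        calc ∫ u, min (B ℓ (f (x t ω) u)) (M * Λ ℓ) ∂μW
            ≤ ∫ _u, (M * Λ ℓ) ∂μW :=
              integral_mono hqint (integrable_const _) fun u => min_le_right _ _
        _ = M * Λ ℓ := by simp
      have hfin : min (B ℓ (x t ω) + c) (M * Λ ℓ) ≤ φ t (x t ω) + c := by
        rw [hφtop t ht]
        calc min (B ℓ (x t ω) + c) (M * Λ ℓ)
            ≤ min (B ℓ (x t ω) + c) (M * Λ ℓ + c) := min_le_min le_rfl (by linarith)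
        _ = min (B ℓ (x t ω)) (M * Λ ℓ) + c := min_add_add_right _ _ _
      exact le_trans (le_min le1 le2) hfin
    have hμ1 : (μ (S (t + 1))).toReal ≤ 1 := by
      simpa using ENNReal.toReal_mono ENNReal.one_ne_top prob_le_one
    calc e (t + 1) = ∫ ω in S (t + 1), (∫ w, min (B ℓ (iterNoise f 1 (x t ω) w))
          (M * Λ ℓ) ∂(Measure.pi fun _ : Fin 1 => μW)) ∂μ := by rw [h1, heq]
    _ ≤ ∫ ω in S (t + 1), (φ t (x t ω) + c) ∂μ :=
        setIntegral_mono_ae_restrict hintG.integrableOn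
          (((hφint t t).add (integrable_const c)).integrableOn) hbound
    _ = (∫ ω in S (t + 1), φ t (x t ω) ∂μ) + (μ (S (t + 1))).toReal • c := by
        rw [integral_add ((hφint t t).integrableOn) (integrableOn_const (measure_ne_top _ _))]
        simp [Measure.real]
    _ ≤ e t + c := by
        have hA : ∫ ω in S (t + 1), φ t (x t ω) ∂μ ≤ e t := by
          rw [← heS t]
          exact setIntegral_mono_set ((hφint t t).integrableOn)
            (ae_of_all _ fun ω => hφnonneg t _ (hinv t ω))
            (HasSubset.Subset.eventuallyLE (hSsub t))
        have hB' : (μ (S (t + 1))).toReal • c ≤ c := by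
          rw [smul_eq_mul]
          nlinarith [ENNReal.toReal_nonneg (a := μ (S (t + 1)))]
        linarith
  -- F6 : k-step supermartingale with first-hit extraction
  have hF6 : ∀ t, ℓ ≤ t → e (t + k) + (μ (FH t)).toReal ≤ e t := by
    intro t ht
    obtain ⟨aeint, hintG, heq⟩ := transfer hf x ℱ t k (hmeasx t) (hmeasx (t + k))
      (B ℓ) (hBmeas _) (hintB ℓ (t + k)) (hMarkov t k)
      (M * Λ ℓ) (hLpos ℓ).le (S (t + 1)) (hSF t)
    have hgl : Integrable (fun ω => min (B ℓ (x (t + k) ω)) (M * Λ ℓ)) μ := by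
      refine ((hintB ℓ (t + k)).abs.add (integrable_const (M * Λ ℓ))).mono'
        (((hBmeas _).min measurable_const).comp (hmeasx (t + k))).aestronglyMeasurable
        (ae_of_all _ fun ω => ?_)
      simpa [Real.norm_eq_abs] using abs_min_le_abs_add (hLpos ℓ).le
    have h1 : e (t + k) ≤ ∫ ω in S (t + 1), min (B ℓ (x (t + k) ω)) (M * Λ ℓ) ∂μ := by
      have h1a : e (t + k) = ∫ ω in S (t + k), min (B ℓ (x (t + k) ω)) (M * Λ ℓ) ∂μ := by
        simp only [hedef]
        exact integral_congr_ae (ae_of_all _ fun ω =>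
          hφtop (t + k) (le_trans ht (Nat.le_add_right t k)) _)
      rw [h1a]
      refine setIntegral_mono_set hgl.integrableOn
        (ae_of_all _ fun ω => le_min (hB0 ℓ le_rfl _ (hinv (t + k) ω)) (hLpos ℓ).le)
        (HasSubset.Subset.eventuallyLE (hSanti _ _ (by omega)))
    have hbound : ∀ᵐ ω ∂μ.restrict (S (t + 1)),
        (∫ w, min (B ℓ (iterNoise f k (x t ω) w)) (M * Λ ℓ)
          ∂(Measure.pi fun _ : Fin k => μW)) ≤ φ t (x t ω) := by
      filter_upwards [ae_restrict_of_ae aeint, ae_restrict_mem ((ℱ.le t) _ (hSF t))]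
        with ω hω hmemω
      have hxts := hSnotu t ω hmemω
      have hqint : Integrable (fun w => min (B ℓ (iterNoise f k (x t ω) w)) (M * Λ ℓ))
          (Measure.pi fun _ : Fin k => μW) := by
        refine (hω.abs.add (integrable_const (M * Λ ℓ))).mono'
          (((hBmeas _).min measurable_const).comp ((iterNoise_measurable hf k).comp
            (measurable_const.prodMk measurable_id))).aestronglyMeasurable
          (ae_of_all _ fun w => ?_)
        simpa [Real.norm_eq_abs] using abs_min_le_abs_add (hLpos ℓ).le
      have le1 : ∫ w, min (B ℓ (iterNoise f k (x t ω) w)) (M * Λ ℓ)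
          ∂(Measure.pi fun _ : Fin k => μW) ≤ B ℓ (x t ω) :=
        le_trans (integral_mono hqint hω fun w => min_le_left _ _) (hBksuper _ hxts)
      have le2 : ∫ w, min (B ℓ (iterNoise f k (x t ω) w)) (M * Λ ℓ)
          ∂(Measure.pi fun _ : Fin k => μW) ≤ M * Λ ℓ := by
        calc ∫ w, min (B ℓ (iterNoise f k (x t ω) w)) (M * Λ ℓ)
              ∂(Measure.pi fun _ : Fin k => μW)
            ≤ ∫ _w, (M * Λ ℓ) ∂(Measure.pi fun _ : Fin k => μW) :=
              integral_mono hqint (integrable_const _) fun w => min_le_right _ _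
        _ = M * Λ ℓ := by simp
      rw [hφtop t ht]
      exact le_min le1 le2
    have h2 : ∫ ω in S (t + 1), min (B ℓ (x (t + k) ω)) (M * Λ ℓ) ∂μ
        ≤ ∫ ω in S (t + 1), φ t (x t ω) ∂μ := by
      rw [heq]
      exact setIntegral_mono_ae_restrict hintG.integrableOn
        ((hφint t t).integrableOn) hbound
    have h3 : e t = (∫ ω in S (t + 1), φ t (x t ω) ∂μ) + ∫ ω in FH t, φ t (x t ω) ∂μ := by
      rw [← heS t]
      conv_lhs => rw [hSsplit t]
      exact setIntegral_union (hSdisj t) (hFHm t) ((hφint t t).integrableOn)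
        ((hφint t t).integrableOn)
    have h4 := hF7' t
    linarith [h1.trans h2]

  -- F8 : geometric decay over the interpolation phase
  have hF8 : ∀ t, t ≤ ℓ → e t ≤ γ * Λ t := by
    intro t
    induction t with
    | zero =>
        intro _
        have hz : Λ 0 = 1 := by simp [hΛdef]
        rw [hz, mul_one]; exact hF3
    | succ t ih =>
        intro ht
        have ht' : t < ℓ := ht
        calc e (t + 1) ≤ α t * e t := hF4 t ht'
        _ ≤ α t * (γ * Λ t) := mul_le_mul_of_nonneg_left (ih ht'.le) (hα t ht').le
        _ = γ * Λ (t + 1) := by rw [hΛsucc t ht']; ring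
  -- F9 : linear growth in the tail residues
  have hF9 : ∀ r : ℕ, e (ℓ + r) ≤ γ * Λ ℓ + r * c := by
    intro r
    induction r with
    | zero => simpa using hF8 ℓ le_rfl
    | succ r ih =>
        have hstep := hF5 (ℓ + r) (Nat.le_add_right _ _)
        have : e (ℓ + (r + 1)) = e ((ℓ + r) + 1) := rfl
        rw [this]
        push_cast
        nlinarith [hstep, ih]
  -- F10 : telescoping Ville-type bound along residue classes
  have hF10 : ∀ r Q : ℕ,
      (∑ q ∈ Finset.range Q, (μ (FH (q * k + r + ℓ))).toReal) + e (Q * k + r + ℓ)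
        ≤ e (r + ℓ) := by
    intro r Q
    induction Q with
    | zero => simp
    | succ Q ih =>
        have hstep := hF6 (Q * k + r + ℓ) (by omega)
        rw [show Q * k + r + ℓ + k = (Q + 1) * k + r + ℓ by ring] at hstep
        rw [Finset.sum_range_succ]
        linarith
  have hF10' : ∀ r Q : ℕ,
      ∑ q ∈ Finset.range Q, (μ (FH (q * k + r + ℓ))).toReal ≤ γ * Λ ℓ + r * c := by
    intro r Q
    have h1 := hF10 r Q
    have h2 := he_nonneg (Q * k + r + ℓ)
    have h3 : e (r + ℓ) ≤ γ * Λ ℓ + r * c := by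
      rw [Nat.add_comm r ℓ]; exact hF9 r
    linarith
  have htail : ∀ r : ℕ, (∑' q : ℕ, μ (FH (q * k + r + ℓ)))
      ≤ ENNReal.ofReal (γ * Λ ℓ + r * c) := by
    intro r
    have hsummable : Summable (fun q => (μ (FH (q * k + r + ℓ))).toReal) :=
      summable_of_sum_range_le (fun q => ENNReal.toReal_nonneg) (hF10' r)
    have h1 : ∑' q, (μ (FH (q * k + r + ℓ))).toReal ≤ γ * Λ ℓ + r * c :=
      hsummable.tsum_le_of_sum_range_le (hF10' r)
    calc ∑' q : ℕ, μ (FH (q * k + r + ℓ))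
        = ∑' q : ℕ, ENNReal.ofReal ((μ (FH (q * k + r + ℓ))).toReal) :=
          tsum_congr fun q => (ENNReal.ofReal_toReal (measure_ne_top μ _)).symm
    _ = ENNReal.ofReal (∑' q, (μ (FH (q * k + r + ℓ))).toReal) :=
          (ENNReal.ofReal_tsum_of_nonneg (fun q => ENNReal.toReal_nonneg) hsummable).symm
    _ ≤ ENNReal.ofReal (γ * Λ ℓ + r * c) := ENNReal.ofReal_le_ofReal h1
  -- the failure event decomposition
  have hdisj : Pairwise (Function.onFun Disjoint FH) := by
    have key : ∀ a b, a < b → Disjoint (FH a) (FH b) := by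
      intro a b hab
      rw [Set.disjoint_left]
      intro ω ha hb
      exact hb.1 a hab ha.2
    intro a b hab
    rcases hab.lt_or_gt with h | h
    · exact key a b h
    · exact (key b a h).symm
  have hcompl : {ω | ∀ t, x t ω ∉ Xu} = (⋃ t, FH t)ᶜ := by
    ext ω
    simp only [Set.mem_compl_iff, Set.mem_iUnion, Set.mem_setOf_eq]
    constructor
    · rintro h ⟨t, ht⟩
      exact h t ht.2
    · intro h t hxt
      have hex : ∃ t, x t ω ∈ Xu := ⟨t, hxt⟩
      exact h ⟨Nat.find hex, ⟨fun s hs => Nat.find_min hex hs, Nat.find_spec hex⟩⟩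
  have hFail : μ {ω | ∀ t, x t ω ∉ Xu} = 1 - μ (⋃ t, FH t) := by
    rw [hcompl, prob_compl_eq_one_sub (MeasurableSet.iUnion hFHm)]
  have hμU : μ (⋃ t, FH t) = ∑' t, μ (FH t) := measure_iUnion hdisj hFHm
  have hsplit : ∑' t, μ (FH t)
      = (∑ t ∈ Finset.range ℓ, μ (FH t)) + ∑' t : ℕ, μ (FH (t + ℓ)) :=
    (Summable.sum_add_tsum_nat_add' (f := fun t => μ (FH t)) (k := ℓ) ENNReal.summable).symm
  haveI : NeZero k := ⟨by omega⟩
  have hreindex : (∑' t : ℕ, μ (FH (t + ℓ)))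
      = ∑' (r : Fin k), ∑' (q : ℕ), μ (FH (q * k + ↑r + ℓ)) := by
    calc ∑' t : ℕ, μ (FH (t + ℓ))
        = ∑' p : ℕ × Fin k, μ (FH ((Nat.divModEquiv k).symm p + ℓ)) :=
          ((Nat.divModEquiv k).symm.tsum_eq (fun t => μ (FH (t + ℓ)))).symm
    _ = ∑' p : ℕ × Fin k, μ (FH (p.1 * k + ↑p.2 + ℓ)) := tsum_congr fun p => rfl
    _ = ∑' (q : ℕ) (r : Fin k), μ (FH (q * k + ↑r + ℓ)) :=
          ENNReal.tsum_prod (f := fun (q : ℕ) (r : Fin k) => μ (FH (q * k + ↑r + ℓ)))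
    _ = ∑' (r : Fin k), ∑' (q : ℕ), μ (FH (q * k + ↑r + ℓ)) := ENNReal.tsum_comm
  have hgauss : (∑ i ∈ Finset.range k, (i : ℝ)) = (k : ℝ) * ((k : ℝ) - 1) / 2 := by
    have h2 := Finset.sum_range_id_mul_two k
    have h3 := congrArg (Nat.cast : ℕ → ℝ) h2
    push_cast [Nat.cast_sub hk] at h3
    linarith
  have htailsum : (∑' t : ℕ, μ (FH (t + ℓ)))
      ≤ ENNReal.ofReal ((k : ℝ) * (γ * Λ ℓ) + (k : ℝ) * ((k : ℝ) - 1) / 2 * c) := by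
    rw [hreindex]
    calc ∑' (r : Fin k), ∑' (q : ℕ), μ (FH (q * k + ↑r + ℓ))
        ≤ ∑' (r : Fin k), ENNReal.ofReal (γ * Λ ℓ + (↑(↑r : ℕ) : ℝ) * c) :=
          ENNReal.tsum_le_tsum fun r => htail ↑r
    _ = ∑ r : Fin k, ENNReal.ofReal (γ * Λ ℓ + (↑(↑r : ℕ) : ℝ) * c) := tsum_fintype _
    _ = ENNReal.ofReal (∑ r : Fin k, (γ * Λ ℓ + (↑(↑r : ℕ) : ℝ) * c)) :=
          (ENNReal.ofReal_sum_of_nonneg fun r _ =>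
            add_nonneg (mul_nonneg hγ0 (hΛpos ℓ).le)
              (mul_nonneg (Nat.cast_nonneg _) hc)).symm
    _ = ENNReal.ofReal ((k : ℝ) * (γ * Λ ℓ) + (k : ℝ) * ((k : ℝ) - 1) / 2 * c) := by
        congr 1
        rw [Fin.sum_univ_eq_sum_range (fun i => γ * Λ ℓ + (i : ℝ) * c) k,
          Finset.sum_add_distrib, Finset.sum_const, Finset.card_range, ← Finset.sum_mul,
          hgauss]
        simp [nsmul_eq_mul]
  have hpre : (∑ t ∈ Finset.range ℓ, μ (FH t))
      ≤ ENNReal.ofReal (γ * ∑ t ∈ Finset.range ℓ, Λ t) := by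
    calc ∑ t ∈ Finset.range ℓ, μ (FH t)
        ≤ ∑ t ∈ Finset.range ℓ, ENNReal.ofReal (γ * Λ t) := by
          refine Finset.sum_le_sum fun t htl => ?_
          rw [Finset.mem_range] at htl
          rw [show μ (FH t) = ENNReal.ofReal ((μ (FH t)).toReal) from
            (ENNReal.ofReal_toReal (measure_ne_top μ _)).symm]
          exact ENNReal.ofReal_le_ofReal (le_trans (hF7 t) (hF8 t htl.le))
    _ = ENNReal.ofReal (γ * ∑ t ∈ Finset.range ℓ, Λ t) := by
          rw [Finset.mul_sum, ENNReal.ofReal_sum_of_nonneg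
            fun t _ => mul_nonneg hγ0 (hΛpos t).le]
  -- combine everything
  have hΛℓ : Λ ℓ = ∏ i ∈ Finset.range ℓ, α i := hΛle ℓ le_rfl
  have hRle : γ * (∑ t ∈ Finset.range ℓ, Λ t)
      + ((k : ℝ) * (γ * Λ ℓ) + (k : ℝ) * ((k : ℝ) - 1) / 2 * c)
      ≤ γ * (1 + (k : ℝ) * ∏ i ∈ Finset.range ℓ, α i +
          ∑ t ∈ Finset.range (ℓ - 1), ∏ i ∈ Finset.range (t + 1), α i) +
        (k : ℝ) * ((k : ℝ) - 1) * c / 2 := by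
    rcases Nat.eq_zero_or_pos ℓ with h0 | hpos
    · subst h0
      simp only [Finset.range_zero, Finset.sum_empty, Finset.prod_empty, mul_zero, zero_add,
        Nat.zero_sub]
      rw [hΛℓ] at *
      simp only [Finset.range_zero, Finset.prod_empty, mul_one]
      nlinarith
    · have hsum : ∑ t ∈ Finset.range ℓ, Λ t
          = 1 + ∑ t ∈ Finset.range (ℓ - 1), ∏ i ∈ Finset.range (t + 1), α i := by
        obtain ⟨n, rfl⟩ : ∃ n, ℓ = n + 1 := ⟨ℓ - 1, by omega⟩
        rw [Finset.sum_range_succ']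
        have hz : Λ 0 = 1 := by simp [hΛdef]
        rw [hz]
        simp only [Nat.add_sub_cancel]
        rw [add_comm]
        congr 1
        refine Finset.sum_congr rfl fun t htl => ?_
        rw [Finset.mem_range] at htl
        exact hΛle (t + 1) (by omega)
      rw [hsum, hΛℓ]
      exact le_of_eq (by ring)
  have hfail_le : μ (⋃ t, FH t) ≤ ENNReal.ofReal
      (γ * (1 + (k : ℝ) * ∏ i ∈ Finset.range ℓ, α i +
          ∑ t ∈ Finset.range (ℓ - 1), ∏ i ∈ Finset.range (t + 1), α i) +
        (k : ℝ) * ((k : ℝ) - 1) * c / 2) := by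
    calc μ (⋃ t, FH t) = ∑' t, μ (FH t) := hμU
    _ = (∑ t ∈ Finset.range ℓ, μ (FH t)) + ∑' t : ℕ, μ (FH (t + ℓ)) := hsplit
    _ ≤ ENNReal.ofReal (γ * ∑ t ∈ Finset.range ℓ, Λ t)
        + ENNReal.ofReal ((k : ℝ) * (γ * Λ ℓ) + (k : ℝ) * ((k : ℝ) - 1) / 2 * c) :=
          add_le_add hpre htailsum
    _ = ENNReal.ofReal (γ * (∑ t ∈ Finset.range ℓ, Λ t)
        + ((k : ℝ) * (γ * Λ ℓ) + (k : ℝ) * ((k : ℝ) - 1) / 2 * c)) := by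
          have hk1 : (1 : ℝ) ≤ (k : ℝ) := by exact_mod_cast hk
          have hkk : (0 : ℝ) ≤ (k : ℝ) * ((k : ℝ) - 1) / 2 := by nlinarith
          rw [ENNReal.ofReal_add (mul_nonneg hγ0 (Finset.sum_nonneg fun t _ => (hΛpos t).le))
            (add_nonneg (mul_nonneg (Nat.cast_nonneg _) (mul_nonneg hγ0 (hΛpos ℓ).le))
              (mul_nonneg hkk hc))]
    _ ≤ _ := ENNReal.ofReal_le_ofReal hRle
  -- finish
  have hprod : (0 : ℝ) < ∏ i ∈ Finset.range ℓ, α i :=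
    Finset.prod_pos fun i hi => hα i (Finset.mem_range.mp hi)
  have hSum0 : (0 : ℝ) ≤ ∑ t ∈ Finset.range (ℓ - 1), ∏ i ∈ Finset.range (t + 1), α i :=
    Finset.sum_nonneg fun t htl =>
      (Finset.prod_pos fun i hi => hα i (by
        rw [Finset.mem_range] at htl hi; omega)).le
  have hk1 : (1 : ℝ) ≤ (k : ℝ) := by exact_mod_cast hk
  have hR'0 : 0 ≤ γ * (1 + (k : ℝ) * ∏ i ∈ Finset.range ℓ, α i +
      ∑ t ∈ Finset.range (ℓ - 1), ∏ i ∈ Finset.range (t + 1), α i) +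
      (k : ℝ) * ((k : ℝ) - 1) * c / 2 := by
    have h1 : (0 : ℝ) ≤ (k : ℝ) * ∏ i ∈ Finset.range ℓ, α i :=
      mul_nonneg (by linarith) hprod.le
    have h2 : (0 : ℝ) ≤ γ * (1 + (k : ℝ) * ∏ i ∈ Finset.range ℓ, α i +
        ∑ t ∈ Finset.range (ℓ - 1), ∏ i ∈ Finset.range (t + 1), α i) :=
      mul_nonneg hγ0 (by linarith)
    have h3 : (0 : ℝ) ≤ (k : ℝ) * ((k : ℝ) - 1) * c :=
      mul_nonneg (mul_nonneg (by linarith) (by linarith)) hc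
    linarith
  have harg : 1 - γ * (1 + (k : ℝ) * ∏ i ∈ Finset.range ℓ, α i +
      ∑ t ∈ Finset.range (ℓ - 1), ∏ i ∈ Finset.range (t + 1), α i) -
      (k : ℝ) * ((k : ℝ) - 1) * c / 2
      = 1 - (γ * (1 + (k : ℝ) * ∏ i ∈ Finset.range ℓ, α i +
      ∑ t ∈ Finset.range (ℓ - 1), ∏ i ∈ Finset.range (t + 1), α i) +
      (k : ℝ) * ((k : ℝ) - 1) * c / 2) := by ring
  rw [hFail, harg]
  calc ENNReal.ofReal (1 - (γ * (1 + (k : ℝ) * ∏ i ∈ Finset.range ℓ, α i +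
        ∑ t ∈ Finset.range (ℓ - 1), ∏ i ∈ Finset.range (t + 1), α i) +
        (k : ℝ) * ((k : ℝ) - 1) * c / 2))
      ≤ 1 - ENNReal.ofReal (γ * (1 + (k : ℝ) * ∏ i ∈ Finset.range ℓ, α i +
        ∑ t ∈ Finset.range (ℓ - 1), ∏ i ∈ Finset.range (t + 1), α i) +
        (k : ℝ) * ((k : ℝ) - 1) * c / 2) := by
        rcases le_total (1 - (γ * (1 + (k : ℝ) * ∏ i ∈ Finset.range ℓ, α i +
          ∑ t ∈ Finset.range (ℓ - 1), ∏ i ∈ Finset.range (t + 1), α i) +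
          (k : ℝ) * ((k : ℝ) - 1) * c / 2)) 0 with h | h
        · rw [ENNReal.ofReal_of_nonpos h]
          exact zero_le
        · refine ENNReal.le_sub_of_add_le_right ENNReal.ofReal_ne_top ?_
          rw [← ENNReal.ofReal_add h hR'0]
          simp
  _ ≤ 1 - μ (⋃ t, FH t) := tsub_le_tsub_left hfail_le 1
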